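/- arXiv:1410.2800 — 2 statements merged into one kernel-verified Lean document; each statement's English description precedes it below -/
import Mathlib

section
/- Let L, T > 0, Ω = (-L/2, L/2) × (0, T), v > 0 and Λ > 1. Let f ∈ L¹(Ω; ℝ) satisfy f ≥ 0 almost everywhere in Ω and ∫_Ω f > 0. Then the function λ ↦ T_f(v,λ) is not identically zero on [1, Λ], and consequently ∫_1^Λ |T_f(v,λ)|² λ⁴ (λ² − 1)^{-1/2} dλ > 0; that is, a ship of finite length with positive displaced volume has strictly positive Michell wave resistance at every speed. -/
open MeasureTheory Complex Set

/-- Michell-type transform of a function `f` on the rectangle `Ω`. -/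
noncomputable def michellTransform (L T v lam : ℝ) (f : ℝ × ℝ → ℝ) : ℂ :=
  ∫ p in (Ioo (-L/2) (L/2)) ×ˢ (Ioo (0:ℝ) T),
    (f p : ℂ) * Complex.exp (-(lam^2 * v * p.2 : ℝ)) *
      Complex.exp (-(Complex.I * lam * v * p.1))


noncomputable def michellG (L T v : ℝ) (f : ℝ × ℝ → ℝ) (z : ℂ) : ℂ :=
  ∫ p in (Ioo (-L/2) (L/2)) ×ˢ (Ioo (0:ℝ) T),
    (f p : ℂ) * Complex.exp (-(z^2 * v * p.2) - Complex.I * z * v * p.1)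

lemma michellG_differentiable (L T v : ℝ) (f : ℝ × ℝ → ℝ) (hL : 0 < L) (hT : 0 < T)
    (hv : 0 < v) (hf : IntegrableOn f ((Ioo (-L/2) (L/2)) ×ˢ (Ioo (0:ℝ) T))) :
    Differentiable ℂ (michellG L T v f) := by
  intro z₀
  set Ω : Set (ℝ × ℝ) := (Ioo (-L/2) (L/2)) ×ˢ (Ioo (0:ℝ) T) with hΩ
  have hΩm : MeasurableSet Ω := (measurableSet_Ioo.prod measurableSet_Ioo)
  set μ := volume.restrict Ω with hμ
  have hfi : Integrable f μ := hf
  set R : ℝ := ‖z₀‖ + 1 with hR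
  have hR0 : 0 < R := by positivity
  set C : ℝ := Real.exp (R^2*v*T + R*v*(L/2)) * (2*R*v*T + v*(L/2)) with hC
  have hmemae : ∀ᵐ p ∂μ, p ∈ Ω := ae_restrict_mem hΩm
  have hcont : ∀ z : ℂ, Continuous fun p : ℝ × ℝ =>
      Complex.exp (-(z^2 * v * p.2) - Complex.I * z * v * p.1) := by
    intro z; fun_prop
  have hmeas : ∀ z : ℂ, AEStronglyMeasurable
      (fun p : ℝ × ℝ => (f p : ℂ) * Complex.exp (-(z^2 * v * p.2) - Complex.I * z * v * p.1)) μ :=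
    fun z => (Complex.continuous_ofReal.comp_aestronglyMeasurable
      hfi.aestronglyMeasurable).mul (hcont z).aestronglyMeasurable
  have hbnd : ∀ (z : ℂ) (p : ℝ × ℝ), ‖z‖ ≤ R → p ∈ Ω →
      ‖Complex.exp (-(z^2 * v * p.2) - Complex.I * z * v * p.1)‖
        ≤ Real.exp (R^2*v*T + R*v*(L/2)) := by
    intro z p hz hp
    rw [Complex.norm_exp, Real.exp_le_exp]
    have h1 : (-(z^2 * v * p.2) - Complex.I * z * v * p.1).re
        ≤ ‖-(z^2 * v * p.2) - Complex.I * z * v * p.1‖ := Complex.re_le_norm _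
    refine h1.trans ?_
    refine (norm_sub_le _ _).trans ?_
    have e1 : ‖-(z^2 * v * p.2)‖ = ‖z‖^2 * v * p.2 := by
      rw [norm_neg, norm_mul, norm_mul, norm_pow, Complex.norm_real, Complex.norm_real,
        Real.norm_of_nonneg hv.le, Real.norm_of_nonneg hp.2.1.le]
    have e2 : ‖Complex.I * z * v * p.1‖ = ‖z‖ * v * |p.1| := by
      rw [norm_mul, norm_mul, norm_mul, Complex.norm_I, one_mul, Complex.norm_real,
        Complex.norm_real, Real.norm_of_nonneg hv.le, Real.norm_eq_abs]
    rw [e1, e2]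
    have hz0 : (0:ℝ) ≤ ‖z‖ := norm_nonneg _
    have hp2 : p.2 ≤ T := le_of_lt hp.2.2
    have hp2' : 0 ≤ p.2 := le_of_lt hp.2.1
    have hp1 : |p.1| ≤ L/2 := by
      rw [abs_le]; exact ⟨by linarith [hp.1.1], le_of_lt hp.1.2⟩
    have hp1' : 0 ≤ |p.1| := abs_nonneg _
    have k1 : ‖z‖ ^ 2 * v * p.2 ≤ R ^ 2 * v * T :=
      mul_le_mul (mul_le_mul (pow_le_pow_left₀ hz0 hz 2) le_rfl hv.le (by positivity)) hp2 hp2'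
        (by positivity)
    have k2 : ‖z‖ * v * |p.1| ≤ R * v * (L/2) :=
      mul_le_mul (mul_le_mul hz le_rfl hv.le hR0.le) hp1 hp1' (by positivity)
    exact add_le_add k1 k2
  have key := hasDerivAt_integral_of_dominated_loc_of_deriv_le
    (F := fun (z : ℂ) (p : ℝ × ℝ) =>
      (f p : ℂ) * Complex.exp (-(z^2 * v * p.2) - Complex.I * z * v * p.1))
    (F' := fun (z : ℂ) (p : ℝ × ℝ) => (f p : ℂ) *
      (Complex.exp (-(z^2 * v * p.2) - Complex.I * z * v * p.1)
        * (-(2*z*v*p.2) - Complex.I*v*p.1)))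
    (bound := fun p => |f p| * C) (x₀ := z₀) (μ := μ) (s := Metric.ball z₀ 1) (Metric.ball_mem_nhds z₀ one_pos)
    (Filter.Eventually.of_forall hmeas) ?_ ?_ ?_ ?_ ?_
  · exact key.2.differentiableAt
  · -- Integrable (F z₀)
    refine Integrable.mono' ((hfi.norm).const_mul (Real.exp (R^2*v*T + R*v*(L/2))))
      (hmeas z₀) ?_
    filter_upwards [hmemae] with p hp
    have hb := hbnd z₀ p (by rw [hR]; linarith) hp
    rw [norm_mul, Complex.norm_real, Real.norm_eq_abs]
    exact (mul_le_mul_of_nonneg_left hb (abs_nonneg _)).trans_eq (mul_comm _ _)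
  · -- AEStronglyMeasurable (F' z₀)
    refine (Complex.continuous_ofReal.comp_aestronglyMeasurable
      hfi.aestronglyMeasurable).mul (Continuous.aestronglyMeasurable ?_)
    fun_prop
  · -- bound
    filter_upwards [hmemae] with p hp z hz
    have h1 : ‖z - z₀‖ < 1 := mem_ball_iff_norm.mp hz
    have hzR : ‖z‖ ≤ R := by
      have := norm_sub_norm_le z z₀; rw [hR]; linarith
    have hb := hbnd z p hzR hp
    have hp2 : p.2 ≤ T := le_of_lt hp.2.2
    have hp2' : 0 ≤ p.2 := le_of_lt hp.2.1
    have hp1 : |p.1| ≤ L/2 := by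
      rw [abs_le]; exact ⟨by linarith [hp.1.1], le_of_lt hp.1.2⟩
    have hw : ‖-(2*z*v*p.2) - Complex.I*v*p.1‖ ≤ 2*R*v*T + v*(L/2) := by
      refine (norm_sub_le _ _).trans ?_
      have e1 : ‖-(2*z*(v:ℂ)*p.2)‖ = 2 * ‖z‖ * v * p.2 := by
        rw [norm_neg, norm_mul, norm_mul, norm_mul, Complex.norm_real, Complex.norm_real,
          Real.norm_of_nonneg hv.le, Real.norm_of_nonneg hp2']
        norm_num
      have e2 : ‖Complex.I*(v:ℂ)*p.1‖ = v * |p.1| := by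
        rw [norm_mul, norm_mul, Complex.norm_I, one_mul, Complex.norm_real, Complex.norm_real,
          Real.norm_of_nonneg hv.le, Real.norm_eq_abs]
      rw [e1, e2]
      have k1 : 2 * ‖z‖ * v * p.2 ≤ 2 * R * v * T :=
        mul_le_mul (by nlinarith [norm_nonneg z]) hp2 hp2' (by positivity)
      have k2 : v * |p.1| ≤ v * (L/2) := mul_le_mul_of_nonneg_left hp1 hv.le
      exact add_le_add k1 k2
    rw [norm_mul, norm_mul, Complex.norm_real, Real.norm_eq_abs, hC]
    refine mul_le_mul_of_nonneg_left ?_ (abs_nonneg _)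
    exact mul_le_mul hb hw (by positivity) (Real.exp_pos _).le
  · -- bound integrable
    simpa [Real.norm_eq_abs] using (hfi.norm).mul_const C
  · -- derivative
    refine Filter.Eventually.of_forall fun p z _ => ?_
    have h1 : HasDerivAt (fun z : ℂ => z^2) (2*z) z := by
      simpa using hasDerivAt_pow 2 z
    have h2 := (h1.mul_const ((v:ℂ))).mul_const ((p.2:ℂ))
    have h3 : HasDerivAt (fun z : ℂ => Complex.I * z * v * p.1) (Complex.I * v * p.1) z := by
      simpa using (((hasDerivAt_id z).const_mul Complex.I).mul_const ((v:ℂ))).mul_const ((p.1:ℂ))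
    exact ((h2.neg.sub h3).cexp).const_mul ((f p : ℂ))


lemma michellTransform_eq_G (L T v : ℝ) (f : ℝ × ℝ → ℝ) (lam : ℝ) :
    michellTransform L T v lam f = michellG L T v f lam := by
  unfold michellTransform michellG
  refine integral_congr_ae (Filter.Eventually.of_forall fun p => ?_)
  simp only [mul_assoc, ← Complex.exp_add]
  congr 2
  push_cast
  ring

lemma michellG_zero (L T v : ℝ) (f : ℝ × ℝ → ℝ) :
    michellG L T v f 0 = ((∫ p in (Ioo (-L/2) (L/2)) ×ˢ (Ioo (0:ℝ) T), f p : ℝ) : ℂ) := by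
  unfold michellG
  refine Eq.trans (integral_congr_ae (Filter.Eventually.of_forall fun p => ?_)) integral_ofReal
  norm_num

theorem stmt10 (L T v Λ : ℝ) (hL : 0 < L) (hT : 0 < T) (hv : 0 < v) (hΛ : 1 < Λ)
    (f : ℝ × ℝ → ℝ)
    (hf : IntegrableOn f ((Ioo (-L/2) (L/2)) ×ˢ (Ioo (0:ℝ) T)))
    (hpos : ∀ᵐ p ∂(volume.restrict ((Ioo (-L/2) (L/2)) ×ˢ (Ioo (0:ℝ) T))), 0 ≤ f p)
    (hvol : 0 < ∫ p in (Ioo (-L/2) (L/2)) ×ˢ (Ioo (0:ℝ) T), f p) :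
    (¬ ∀ lam ∈ Icc (1:ℝ) Λ, michellTransform L T v lam f = 0) ∧
    0 < ∫ lam in Ioo (1:ℝ) Λ,
        ‖michellTransform L T v lam f‖ ^ 2 * lam ^ 4 /
          Real.sqrt (lam ^ 2 - 1) := by
  have hGdiff : Differentiable ℂ (michellG L T v f) :=
    michellG_differentiable L T v f hL hT hv hf
  set g : ℝ → ℂ := fun t => michellG L T v f ↑t with hg
  have hA : AnalyticOnNhd ℝ g univ := by
    intro t _
    exact ((hGdiff.analyticAt (↑t)).restrictScalars).comp (Complex.ofRealCLM.analyticAt t)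
  -- the transform is not identically zero on `Ioo 1 Λ`
  have hne : ∃ lam ∈ Ioo (1:ℝ) Λ, michellG L T v f ↑lam ≠ 0 := by
    by_contra h
    push_neg at h
    have hfreq : ∃ᶠ t in nhdsWithin (1:ℝ) {x | x ≠ 1}, g t = 0 := by
      have hev : ∀ᶠ t in nhdsWithin (1:ℝ) (Ioi 1), g t = 0 := by
        filter_upwards [Ioo_mem_nhdsGT_of_mem ⟨le_refl (1:ℝ), hΛ⟩] with t ht
        exact h t ht
      exact hev.frequently.filter_mono
        (nhdsWithin_mono _ (fun x (hx : x ∈ Ioi 1) => ne_of_gt hx))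
    have hzero := hA.eqOn_zero_of_preconnected_of_frequently_eq_zero
      isPreconnected_univ (mem_univ (1:ℝ)) hfreq
    have h0 : g 0 = 0 := hzero (mem_univ 0)
    rw [hg] at h0
    simp only [Complex.ofReal_zero, michellG_zero] at h0
    exact absurd (Complex.ofReal_eq_zero.mp h0) (ne_of_gt hvol)
  obtain ⟨lam₀, hlam₀, hlam₀ne⟩ := hne
  constructor
  · intro hall
    exact hlam₀ne (by rw [← michellTransform_eq_G]; exact hall lam₀ (Ioo_subset_Icc_self hlam₀))
  -- positivity of the integral
  simp only [michellTransform_eq_G]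
  set φ : ℝ → ℝ := fun lam => ‖michellG L T v f ↑lam‖ ^ 2 * lam ^ 4 with hφdef
  set W : ℝ → ℝ := fun lam => φ lam / Real.sqrt (lam ^ 2 - 1) with hWdef
  have hTc : Continuous fun lam : ℝ => michellG L T v f ↑lam :=
    hGdiff.continuous.comp Complex.continuous_ofReal
  have hφc : Continuous φ := by
    exact ((continuous_norm.comp hTc).pow 2).mul (continuous_pow 4)
  have hφ0 : ∀ lam : ℝ, 0 ≤ φ lam := fun lam =>
    mul_nonneg (pow_nonneg (norm_nonneg _) 2) (by positivity)
  obtain ⟨M, hM⟩ := (isCompact_Icc (a := (1:ℝ)) (b := Λ)).exists_bound_of_continuousOn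
    hφc.continuousOn
  have hM0 : 0 ≤ M := le_trans (norm_nonneg _) (hM 1 ⟨le_refl 1, hΛ.le⟩)
  -- integrability of W
  have hWm : AEStronglyMeasurable W (volume.restrict (Ioo (1:ℝ) Λ)) := by
    refine (Measurable.div hφc.measurable ?_).aestronglyMeasurable
    exact Real.continuous_sqrt.measurable.comp (by fun_prop)
  have hrpow : IntervalIntegrable (fun x : ℝ => (x - 1) ^ (-(1/2) : ℝ)) volume 1 Λ := by
    have h0 := intervalIntegral.intervalIntegrable_rpow'
      (a := (0:ℝ)) (b := Λ - 1) (r := -(1/2)) (by norm_num)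
    simpa using h0.comp_sub_right 1
  have hgint : IntegrableOn (fun x : ℝ => (M / Real.sqrt 2) * (x - 1) ^ (-(1/2) : ℝ))
      (Ioo (1:ℝ) Λ) := by
    have h1 : IntervalIntegrable (fun x : ℝ => (M / Real.sqrt 2) * (x - 1) ^ (-(1/2) : ℝ))
        volume 1 Λ := hrpow.const_mul _
    rw [intervalIntegrable_iff, uIoc_of_le hΛ.le] at h1
    exact h1.mono_set Ioo_subset_Ioc_self
  have hWboundae : ∀ lam ∈ Ioo (1:ℝ) Λ,
      ‖W lam‖ ≤ (M / Real.sqrt 2) * (lam - 1) ^ (-(1/2) : ℝ) := by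
    intro lam hlam
    have h2 : (0:ℝ) < lam ^ 2 - 1 := by nlinarith [hlam.1]
    have hs : 0 < Real.sqrt (lam ^ 2 - 1) := Real.sqrt_pos.mpr h2
    have hl1 : (0:ℝ) ≤ lam - 1 := by linarith [hlam.1]
    have hWn : 0 ≤ W lam := div_nonneg (hφ0 lam) hs.le
    rw [Real.norm_eq_abs, _root_.abs_of_nonneg hWn]
    have hφM : φ lam ≤ M := by
      have := hM lam ⟨hlam.1.le, hlam.2.le⟩
      rwa [Real.norm_eq_abs, _root_.abs_of_nonneg (hφ0 lam)] at this
    have hkey : Real.sqrt 2 * Real.sqrt (lam - 1) ≤ Real.sqrt (lam ^ 2 - 1) := by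
      rw [← Real.sqrt_mul (by norm_num)]
      exact Real.sqrt_le_sqrt (by nlinarith [hlam.1])
    have hs2 : (0:ℝ) < Real.sqrt 2 * Real.sqrt (lam - 1) := by
      have : (0:ℝ) < lam - 1 := by linarith [hlam.1]
      positivity
    calc W lam = φ lam / Real.sqrt (lam ^ 2 - 1) := rfl
      _ ≤ M / (Real.sqrt 2 * Real.sqrt (lam - 1)) := div_le_div₀ hM0 hφM hs2 hkey
      _ = (M / Real.sqrt 2) * (lam - 1) ^ (-(1/2) : ℝ) := by
          rw [Real.rpow_neg hl1, ← Real.sqrt_eq_rpow, ← div_eq_mul_inv, div_div]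
  have hWint : IntegrableOn W (Ioo (1:ℝ) Λ) := by
    refine Integrable.mono' hgint hWm ?_
    filter_upwards [ae_restrict_mem measurableSet_Ioo] with lam hlam
    exact hWboundae lam hlam
  show 0 < ∫ lam in Ioo (1:ℝ) Λ, W lam
  have h2₀ : (0:ℝ) < lam₀ ^ 2 - 1 := by nlinarith [hlam₀.1]
  have hs₀ : 0 < Real.sqrt (lam₀ ^ 2 - 1) := Real.sqrt_pos.mpr h2₀
  have hW₀ : 0 < W lam₀ := by
    refine div_pos ?_ hs₀
    exact mul_pos (pow_pos (norm_pos_iff.mpr hlam₀ne) 2)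
      (pow_pos (by linarith [hlam₀.1]) 4)
  have hWc : ContinuousAt W lam₀ := by
    refine ContinuousAt.div hφc.continuousAt ?_ hs₀.ne'
    exact (Real.continuous_sqrt.comp (by fun_prop)).continuousAt
  have hnb : W ⁻¹' (Ioi 0) ∩ Ioo 1 Λ ∈ nhds lam₀ :=
    Filter.inter_mem (hWc.preimage_mem_nhds (Ioi_mem_nhds hW₀)) (isOpen_Ioo.mem_nhds hlam₀)
  obtain ⟨ε, hε, hball⟩ := Metric.mem_nhds_iff.mp hnb
  refine (setIntegral_pos_iff_support_of_nonneg_ae ?_ hWint).mpr ?_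
  · filter_upwards [ae_restrict_mem measurableSet_Ioo] with lam hlam
    exact div_nonneg (hφ0 lam) (Real.sqrt_nonneg _)
  · refine lt_of_lt_of_le (Metric.measure_ball_pos volume lam₀ hε) (measure_mono ?_)
    intro x hx
    obtain ⟨hx1, hx2⟩ := hball hx
    exact ⟨Function.mem_support.mpr (ne_of_gt hx1), hx2⟩
end

section
/- Let L, T > 0, Ω = (-L/2, L/2) × (0, T), v > 0 and Λ > 1. Let N_x ≥ 2 and N_z ≥ 2 be integers, set δx = L/N_x, δz = T/N_z, x_i = -L/2 + i·δx for i = 1, …, N_x − 1, and z₁ = T − δz. Define the hat functions φ_i(x) = max(0, 1 − |x − x_i|/δx) and χ₁(z) = max(0, 1 − |z − z₁|/δz). Then for every (α_1, …, α_{N_x−1}) ∈ ℝ^{N_x−1} not all zero, the function f(x,z) = (Σ_{i=1}^{N_x−1} α_i φ_i(x)) χ₁(z) satisfies ∫_1^Λ |T_f(v,λ)|² λ⁴ (λ² − 1)^{-1/2} dλ > 0. In particular, the span of the functions (x,z) ↦ φ_i(x)χ₁(z), i = 1,…,N_x−1, is an (N_x−1)-dimensional subspace on which the truncated Michell wave resistance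 is positive definite. -/
open MeasureTheory Complex Set

/-- The one-dimensional hat (tent) function centered at `c` with half-width `δ`. -/
noncomputable def hatFn (c δ x : ℝ) : ℝ := max 0 (1 - |x - c| / δ)

set_option maxHeartbeats 2000000



lemma linExp_hasDerivAt (ξ a b : ℝ) (hξ : ξ ≠ 0) (x : ℝ) :
    HasDerivAt (fun y : ℝ => Complex.exp (-(Complex.I*ξ*y)) *
        ((b/ξ^2 : ℂ) + (a*Complex.I/ξ) + (b*Complex.I/ξ)*y))
      (((a + b*x : ℝ) : ℂ) * Complex.exp (-(Complex.I*ξ*x))) x := by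
  have h0 : HasDerivAt (fun y : ℝ => -(Complex.I*ξ*y)) (-(Complex.I*ξ)) x := by
    simpa using (Complex.ofRealCLM.hasDerivAt (x := x)).const_mul (-(Complex.I*ξ))
  have h1 := h0.cexp
  have h2 : HasDerivAt (fun y : ℝ => (b/ξ^2 : ℂ) + (a*Complex.I/ξ) + (b*Complex.I/ξ)*y)
      ((b*Complex.I/ξ : ℂ)) x := by
    simpa using ((Complex.ofRealCLM.hasDerivAt (x := x)).const_mul
      ((b : ℂ)*Complex.I/ξ)).const_add ((b/ξ^2 : ℂ) + (a*Complex.I/ξ))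
  have := h1.mul h2
  refine this.congr_deriv ?_
  have hξ' : (ξ:ℂ) ≠ 0 := Complex.ofReal_ne_zero.mpr hξ
  push_cast
  field_simp
  ring_nf
  simp [Complex.I_sq]

lemma linExp_integral (ξ a b s t : ℝ) (hξ : ξ ≠ 0) :
    ∫ x in s..t, ((a + b*x : ℝ) : ℂ) * Complex.exp (-(Complex.I*ξ*x)) =
      (Complex.exp (-(Complex.I*ξ*t)) * ((b/ξ^2 : ℂ) + (a*Complex.I/ξ) + (b*Complex.I/ξ)*t)) -
      (Complex.exp (-(Complex.I*ξ*s)) * ((b/ξ^2 : ℂ) + (a*Complex.I/ξ) + (b*Complex.I/ξ)*s)) := by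
  refine intervalIntegral.integral_eq_sub_of_hasDerivAt
    (fun x _ => linExp_hasDerivAt ξ a b hξ x) ?_
  apply Continuous.intervalIntegrable
  fun_prop

lemma hatFn_continuous (c δ : ℝ) : Continuous (hatFn c δ) := by
  unfold hatFn; fun_prop

lemma hatFn_nonneg (c δ x : ℝ) : 0 ≤ hatFn c δ x := le_max_left _ _

lemma hatFn_le_one (c δ x : ℝ) (hδ : 0 < δ) : hatFn c δ x ≤ 1 := by
  unfold hatFn
  have : 0 ≤ |x - c| / δ := div_nonneg (abs_nonneg _) hδ.le
  simp only [max_le_iff]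
  constructor <;> linarith

lemma hatFn_eq_zero (c δ x : ℝ) (hδ : 0 < δ) (h : δ ≤ |x - c|) : hatFn c δ x = 0 := by
  unfold hatFn
  have : 1 ≤ |x - c| / δ := (one_le_div hδ).mpr h
  simp only [max_eq_left_iff]
  linarith

lemma hatFn_pos (c δ x : ℝ) (hδ : 0 < δ) (h : |x - c| < δ) : 0 < hatFn c δ x := by
  unfold hatFn
  have : |x - c| / δ < 1 := (div_lt_one hδ).mpr h
  simp only [lt_max_iff]
  right; linarith

lemma hat_integral (c δ ξ : ℝ) (hδ : 0 < δ) (hξ : ξ ≠ 0) :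
    ∫ x in (c-δ)..(c+δ), (hatFn c δ x : ℂ) * Complex.exp (-(Complex.I*ξ*x)) =
      ((2:ℂ) - Complex.exp (Complex.I*ξ*δ) - Complex.exp (-(Complex.I*ξ*δ))) / (δ*ξ^2) *
        Complex.exp (-(Complex.I*ξ*c)) := by
  have hcont : Continuous fun x : ℝ => (hatFn c δ x : ℂ) * Complex.exp (-(Complex.I*ξ*x)) := by
    have := hatFn_continuous c δ
    fun_prop
  have hsplit : ∫ x in (c-δ)..(c+δ), (hatFn c δ x : ℂ) * Complex.exp (-(Complex.I*ξ*x)) =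
      (∫ x in (c-δ)..c, (hatFn c δ x : ℂ) * Complex.exp (-(Complex.I*ξ*x))) +
      ∫ x in c..(c+δ), (hatFn c δ x : ℂ) * Complex.exp (-(Complex.I*ξ*x)) :=
    (intervalIntegral.integral_add_adjacent_intervals
      (hcont.intervalIntegrable _ _) (hcont.intervalIntegrable _ _)).symm
  have h1 : ∫ x in (c-δ)..c, (hatFn c δ x : ℂ) * Complex.exp (-(Complex.I*ξ*x)) =
      ∫ x in (c-δ)..c, (((1 - c/δ) + (1/δ)*x : ℝ) : ℂ) * Complex.exp (-(Complex.I*ξ*x)) := by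
    apply intervalIntegral.integral_congr
    intro x hx
    rw [uIcc_of_le (by linarith)] at hx
    obtain ⟨hx1, hx2⟩ := hx
    have habs : |x - c| = c - x := by rw [abs_of_nonpos (by linarith)]; ring
    have hh : hatFn c δ x = (1 - c/δ) + (1/δ)*x := by
      unfold hatFn
      rw [habs, max_eq_right]
      · field_simp; ring
      · have : (c - x)/δ ≤ 1 := by rw [div_le_one hδ]; linarith
        linarith
    dsimp only
    rw [hh]
  have h2 : ∫ x in c..(c+δ), (hatFn c δ x : ℂ) * Complex.exp (-(Complex.I*ξ*x)) =
      ∫ x in c..(c+δ), (((1 + c/δ) + (-(1/δ))*x : ℝ) : ℂ) * Complex.exp (-(Complex.I*ξ*x)) := by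
    apply intervalIntegral.integral_congr
    intro x hx
    rw [uIcc_of_le (by linarith)] at hx
    obtain ⟨hx1, hx2⟩ := hx
    have habs : |x - c| = x - c := abs_of_nonneg (by linarith)
    have hh : hatFn c δ x = (1 + c/δ) + (-(1/δ))*x := by
      unfold hatFn
      rw [habs, max_eq_right]
      · field_simp; ring
      · have : (x - c)/δ ≤ 1 := by rw [div_le_one hδ]; linarith
        linarith
    dsimp only
    rw [hh]
  rw [hsplit, h1, h2, linExp_integral ξ _ _ _ _ hξ, linExp_integral ξ _ _ _ _ hξ]
  have hξ' : (ξ:ℂ) ≠ 0 := Complex.ofReal_ne_zero.mpr hξ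
  have hδ' : (δ:ℂ) ≠ 0 := Complex.ofReal_ne_zero.mpr (ne_of_gt hδ)
  have e1 : Complex.exp (-(Complex.I*ξ*((c:ℂ)-(δ:ℂ)))) =
      Complex.exp (-(Complex.I*ξ*c)) * Complex.exp (Complex.I*ξ*δ) := by
    rw [← Complex.exp_add]; ring_nf
  have e2 : Complex.exp (-(Complex.I*ξ*((c:ℂ)+(δ:ℂ)))) =
      Complex.exp (-(Complex.I*ξ*c)) * Complex.exp (-(Complex.I*ξ*δ)) := by
    rw [← Complex.exp_add]; ring_nf
  have hw : Complex.exp (-(Complex.I*ξ*δ)) = (Complex.exp (Complex.I*ξ*δ))⁻¹ :=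
    Complex.exp_neg _
  have hu : Complex.exp (Complex.I*(ξ:ℂ)*(δ:ℂ)) ≠ 0 := Complex.exp_ne_zero _
  push_cast
  rw [e1, e2, hw]
  set E := Complex.exp (-(Complex.I*(ξ:ℂ)*(c:ℂ))) with hE
  set u := Complex.exp (Complex.I*(ξ:ℂ)*(δ:ℂ)) with hu2
  field_simp
  have hX : ((δ:ℂ)^3*((δ:ℂ))⁻¹^3)*((ξ:ℂ)^4*((ξ:ℂ))⁻¹^4) = 1 := by
    rw [← mul_pow, ← mul_pow, mul_inv_cancel₀ hδ', mul_inv_cancel₀ hξ']; norm_num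
  have huu : u * u⁻¹ = 1 := mul_inv_cancel₀ hu
  ring

lemma countable_exp_fiber (a : ℝ) (ha : a ≠ 0) (r : ℂ) :
    Set.Countable {x : ℝ | Complex.exp (-(Complex.I * a * x)) = r} := by
  rcases eq_empty_or_nonempty {x : ℝ | Complex.exp (-(Complex.I * a * x)) = r} with h | ⟨x₀, hx₀⟩
  · rw [h]; exact countable_empty
  · refine (Set.countable_range (fun n : ℤ => x₀ - 2*Real.pi*n/a)).mono ?_
    intro x hx
    simp only [mem_setOf_eq] at hx hx₀
    rw [← hx₀] at hx
    obtain ⟨n, hn⟩ := Complex.exp_eq_exp_iff_exists_int.mp hx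
    refine ⟨n, ?_⟩
    have him := congrArg Complex.im hn
    simp [Complex.add_im, Complex.mul_im] at him
    -- him should be a real linear equation
    field_simp
    nlinarith [him, Real.pi_pos]

lemma hat_integral_Ioo (A B c δ ξ : ℝ) (hδ : 0 < δ) (hξ : ξ ≠ 0)
    (h1 : A ≤ c - δ) (h2 : c + δ ≤ B) :
    ∫ x in Ioo A B, (hatFn c δ x : ℂ) * Complex.exp (-(Complex.I*ξ*x)) =
      ((2:ℂ) - Complex.exp (Complex.I*ξ*δ) - Complex.exp (-(Complex.I*ξ*δ))) / (δ*ξ^2) *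
        Complex.exp (-(Complex.I*ξ*c)) := by
  have hvanish : ∀ x ∈ Ioo A B \ Ioo (c-δ) (c+δ),
      (hatFn c δ x : ℂ) * Complex.exp (-(Complex.I*ξ*x)) = 0 := by
    rintro x ⟨-, hx⟩
    rw [mem_Ioo, not_and_or] at hx
    have : δ ≤ |x - c| := by
      rcases hx with h | h
      · push_neg at h; rw [abs_sub_comm, _root_.abs_of_nonneg (by linarith)]; linarith
      · push_neg at h; rw [_root_.abs_of_nonneg (by linarith)]; linarith
    rw [hatFn_eq_zero c δ x hδ this]
    simp
  rw [setIntegral_eq_of_subset_of_forall_diff_eq_zero measurableSet_Ioo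
    (Ioo_subset_Ioo h1 h2) hvanish,
    ← integral_Ioc_eq_integral_Ioo, ← intervalIntegral.integral_of_le (by linarith),
    hat_integral c δ ξ hδ hξ]

lemma Z_pos (T δz a : ℝ) (hT : 0 < T) (hδz : 0 < δz) (hδzT : δz ≤ T/2) :
    0 < ∫ z in Ioo (0:ℝ) T, hatFn (T - δz) δz z * Real.exp (-(a * z)) := by
  have hcont : Continuous (fun z => hatFn (T - δz) δz z * Real.exp (-(a * z))) := by
    have := hatFn_continuous (T - δz) δz
    fun_prop
  have hint : IntegrableOn (fun z => hatFn (T - δz) δz z * Real.exp (-(a * z)))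
      (Ioo (0:ℝ) T) := (hcont.integrableOn_Icc (a := 0) (b := T)).mono_set Ioo_subset_Icc_self
  rw [setIntegral_pos_iff_support_of_nonneg_ae ?_ hint]
  · refine lt_of_lt_of_le ?_ (measure_mono (?_ :
      Ioo (T - δz) T ⊆ Function.support _ ∩ Ioo (0:ℝ) T))
    · rw [Real.volume_Ioo]
      simp only [ENNReal.ofReal_pos]
      linarith
    · intro z hz
      obtain ⟨hz1, hz2⟩ := hz
      constructor
      · apply ne_of_gt
        apply mul_pos _ (Real.exp_pos _)
        apply hatFn_pos _ _ _ hδz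
        rw [_root_.abs_of_nonneg (by linarith)]
        linarith
      · exact ⟨by linarith, hz2⟩
  · filter_upwards with z
    exact mul_nonneg (hatFn_nonneg _ _ _) (Real.exp_pos _).le

lemma cos_countable (a : ℝ) (ha : a ≠ 0) :
    Set.Countable {lam : ℝ | Real.cos (a * lam) = 1} := by
  refine (Set.countable_range (fun n : ℤ => (n:ℝ) * (2*Real.pi) / a)).mono ?_
  intro lam hlam
  simp only [mem_setOf_eq] at hlam
  obtain ⟨n, hn⟩ := (Real.cos_eq_one_iff _).mp hlam
  exact ⟨n, by field_simp; linarith [hn]⟩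

lemma poly_fiber_countable (q : Polynomial ℂ) (hq : q ≠ 0) (a : ℝ) (ha : a ≠ 0) :
    Set.Countable {lam : ℝ | q.eval (Complex.exp (-(Complex.I * a * lam))) = 0} := by
  have hsub : {lam : ℝ | q.eval (Complex.exp (-(Complex.I * a * lam))) = 0} ⊆
      ⋃ r ∈ {z : ℂ | q.IsRoot z}, {lam : ℝ | Complex.exp (-(Complex.I * a * lam)) = r} := by
    intro lam hlam
    simp only [mem_setOf_eq] at hlam
    exact mem_biUnion hlam rfl
  refine Set.Countable.mono hsub ?_
  exact Set.Countable.biUnion (Polynomial.finite_setOf_isRoot hq).countable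
    (fun r _ => countable_exp_fiber a ha r)

lemma X_eq (L v δx : ℝ) (hδx : 0 < δx) {n : ℕ} (α : Fin n → ℝ) (c : Fin n → ℝ)
    (hc : ∀ i, c i = -L/2 + ((i:ℕ)+1)*δx)
    (hsupp : ∀ i : Fin n, -L/2 ≤ c i - δx ∧ c i + δx ≤ L/2)
    (lam : ℝ) (hξ : lam * v ≠ 0) :
    ∫ x in Ioo (-L/2) (L/2), ((∑ i, α i * hatFn (c i) δx x : ℝ) : ℂ) *
        Complex.exp (-(Complex.I*lam*v*x)) =
      (((2:ℂ) - Complex.exp (Complex.I*((lam*v : ℝ):ℂ)*(δx:ℂ)) -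
          Complex.exp (-(Complex.I*((lam*v : ℝ):ℂ)*(δx:ℂ))))
        / ((δx:ℂ)*((lam*v : ℝ):ℂ)^2) * Complex.exp (Complex.I*((lam*v : ℝ):ℂ)*((L/2 : ℝ):ℂ))) *
      ∑ i, (α i : ℂ) * (Complex.exp (-(Complex.I * ((v*δx : ℝ):ℂ) * (lam:ℂ))))^((i:ℕ)+1) := by
  have hstep : ∀ x : ℝ, ((∑ i, α i * hatFn (c i) δx x : ℝ) : ℂ) *
      Complex.exp (-(Complex.I*lam*v*x)) =
      ∑ i, (α i : ℂ) * ((hatFn (c i) δx x : ℂ) *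
        Complex.exp (-(Complex.I*((lam*v : ℝ):ℂ)*x))) := by
    intro x
    have e : Complex.exp (-(Complex.I*(lam:ℂ)*(v:ℂ)*(x:ℂ))) =
        Complex.exp (-(Complex.I*((lam*v : ℝ):ℂ)*(x:ℂ))) := by
      congr 1; push_cast; ring
    rw [e]
    generalize Complex.exp (-(Complex.I*((lam*v : ℝ):ℂ)*(x:ℂ))) = E
    push_cast
    rw [Finset.sum_mul]
    exact Finset.sum_congr rfl fun i _ => by ring
  simp only [hstep]
  rw [integral_finset_sum]
  · have hterm : ∀ i : Fin n,
        ∫ x in Ioo (-L/2) (L/2), (α i : ℂ) * ((hatFn (c i) δx x : ℂ) *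
          Complex.exp (-(Complex.I*((lam*v : ℝ):ℂ)*x))) =
        (α i : ℂ) * ((((2:ℂ) - Complex.exp (Complex.I*((lam*v : ℝ):ℂ)*(δx:ℂ)) -
          Complex.exp (-(Complex.I*((lam*v : ℝ):ℂ)*(δx:ℂ))))
        / ((δx:ℂ)*((lam*v : ℝ):ℂ)^2)) * (Complex.exp (Complex.I*((lam*v : ℝ):ℂ)*((L/2 : ℝ):ℂ)) *
          (Complex.exp (-(Complex.I * ((v*δx : ℝ):ℂ) * (lam:ℂ))))^((i:ℕ)+1))) := by
      intro i
      rw [MeasureTheory.integral_const_mul,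
        hat_integral_Ioo (-L/2) (L/2) (c i) δx (lam*v) hδx hξ (hsupp i).1 (hsupp i).2]
      congr 1
      rw [mul_assoc]
      congr 1
      rw [← Complex.exp_nat_mul, ← Complex.exp_add]
      congr 1
      rw [hc i]
      push_cast
      ring
    simp only [hterm]
    rw [Finset.mul_sum]
    exact Finset.sum_congr rfl fun i _ => by ring
  · intro i _
    have h1 := hatFn_continuous (c i) δx
    have : Continuous fun x : ℝ => (α i : ℂ) * ((hatFn (c i) δx x : ℂ) *
        Complex.exp (-(Complex.I*((lam*v : ℝ):ℂ)*x))) := by fun_prop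
    exact (this.integrableOn_Icc (a := -L/2) (b := L/2)).mono_set Ioo_subset_Icc_self

lemma two_sub_exp_ne (a : ℝ) (h : Real.cos a ≠ 1) :
    ((2:ℂ) - Complex.exp (Complex.I*(a:ℂ)) - Complex.exp (-(Complex.I*(a:ℂ)))) ≠ 0 := by
  rw [show Complex.I*(a:ℂ) = (a:ℂ)*Complex.I by ring]
  rw [show -((a:ℂ)*Complex.I) = ((-a : ℝ):ℂ)*Complex.I by push_cast; ring]
  rw [Complex.exp_mul_I, Complex.exp_mul_I, ← Complex.ofReal_cos, ← Complex.ofReal_sin,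
    ← Complex.ofReal_cos, ← Complex.ofReal_sin, Real.cos_neg, Real.sin_neg]
  intro hcontra
  have h2 : ((Real.cos a : ℝ) : ℂ) = 1 := by
    have hs : ((-Real.sin a : ℝ) : ℂ) = -((Real.sin a : ℝ) : ℂ) := by push_cast; ring
    rw [hs] at hcontra
    linear_combination -(1/2) * hcontra
  exact h (by exact_mod_cast h2)

lemma poly_ne_zero {n : ℕ} (α : Fin n → ℝ) (i₀ : Fin n) (h : α i₀ ≠ 0) :
    (∑ i : Fin n, Polynomial.C ((α i : ℂ)) * Polynomial.X^((i:ℕ)+1)) ≠ 0 := by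
  intro hq
  have h2 := congrArg (fun p => Polynomial.coeff p ((i₀:ℕ)+1)) hq
  simp only [Polynomial.finset_sum_coeff, Polynomial.coeff_C_mul, Polynomial.coeff_X_pow,
    Polynomial.coeff_zero, mul_ite, mul_one, mul_zero] at h2
  rw [Finset.sum_eq_single i₀] at h2
  · simp at h2
    exact h (by exact_mod_cast h2)
  · intro b _ hb
    rw [if_neg]
    intro heq
    exact hb (Fin.ext (by omega))
  · intro hmem
    exact absurd (Finset.mem_univ i₀) hmem

lemma poly_eval {n : ℕ} (α : Fin n → ℝ) (w : ℂ) :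
    (∑ i : Fin n, Polynomial.C ((α i : ℂ)) * Polynomial.X^((i:ℕ)+1)).eval w =
      ∑ i : Fin n, (α i : ℂ) * w^((i:ℕ)+1) := by
  rw [Polynomial.eval_finset_sum]
  exact Finset.sum_congr rfl fun i _ => by simp
theorem stmt16 (L T v Λ : ℝ) (hL : 0 < L) (hT : 0 < T) (hv : 0 < v) (hΛ : 1 < Λ)
    (Nx Nz : ℕ) (hNx : 2 ≤ Nx) (hNz : 2 ≤ Nz)
    (α : Fin (Nx - 1) → ℝ) (hα : α ≠ 0) :
    0 < ∫ lam in Ioo (1:ℝ) Λ,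
        ‖michellTransform L T v lam
          (fun p =>
            (∑ i : Fin (Nx - 1),
              α i * hatFn (-L/2 + ((i : ℕ) + 1) * (L / Nx)) (L / Nx) p.1) *
            hatFn (T - T / Nz) (T / Nz) p.2)‖ ^ 2 *
          lam ^ 4 / Real.sqrt (lam ^ 2 - 1) := by
  have h2Nx : (2:ℝ) ≤ (Nx:ℝ) := by exact_mod_cast hNx
  have h2Nz : (2:ℝ) ≤ (Nz:ℝ) := by exact_mod_cast hNz
  have hNxR : (0:ℝ) < Nx := by linarith
  have hNzR : (0:ℝ) < Nz := by linarith
  set δx : ℝ := L / Nx with hδxdef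
  set δz : ℝ := T / Nz with hδzdef
  have hδx : 0 < δx := div_pos hL hNxR
  have hδz : 0 < δz := div_pos hT hNzR
  have hδzT : δz ≤ T / 2 := by
    rw [hδzdef, div_le_div_iff₀ hNzR two_pos]
    nlinarith
  set f₀ : ℝ × ℝ → ℝ := fun p =>
    (∑ i : Fin (Nx - 1), α i * hatFn (-L/2 + ((i : ℕ) + 1) * δx) δx p.1) *
      hatFn (T - δz) δz p.2 with hf₀def
  -- support bounds for the hats
  have hsupp : ∀ i : Fin (Nx - 1),
      -L/2 ≤ (-L/2 + ((i:ℕ)+1)*δx) - δx ∧ (-L/2 + ((i:ℕ)+1)*δx) + δx ≤ L/2 := by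
    intro i
    have hi : (i:ℕ) + 2 ≤ Nx := by have := i.isLt; omega
    have hiR : ((i:ℕ):ℝ) + 2 ≤ (Nx:ℝ) := by exact_mod_cast hi
    have hi0 : (0:ℝ) ≤ ((i:ℕ):ℝ) := Nat.cast_nonneg _
    have hNδ : (Nx:ℝ) * δx = L := by
      rw [hδxdef]; field_simp
    constructor
    · nlinarith
    · nlinarith
  -- continuity of f₀
  have hf₀cont : Continuous f₀ := by
    rw [hf₀def]
    have h1 : Continuous fun x : ℝ =>
        ∑ i : Fin (Nx-1), α i * hatFn (-L/2 + ((i:ℕ)+1)*δx) δx x :=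
      continuous_finset_sum _ (fun i _ => continuous_const.mul (hatFn_continuous _ _))
    have h2 := hatFn_continuous (T - δz) δz
    exact (h1.comp continuous_fst).mul (h2.comp continuous_snd)
  -- global bound for f₀
  set B : ℝ := ∑ i : Fin (Nx - 1), |α i| with hBdef
  have hf₀bdd : ∀ p : ℝ × ℝ, |f₀ p| ≤ B := by
    intro p
    rw [hf₀def]
    simp only
    rw [abs_mul]
    have h1 : |∑ i : Fin (Nx-1), α i * hatFn (-L/2 + ((i:ℕ)+1)*δx) δx p.1| ≤ B := by
      refine le_trans (Finset.abs_sum_le_sum_abs _ _) ?_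
      rw [hBdef]
      apply Finset.sum_le_sum
      intro i _
      rw [abs_mul]
      have := hatFn_nonneg (-L/2 + ((i:ℕ)+1)*δx) δx p.1
      have := hatFn_le_one (-L/2 + ((i:ℕ)+1)*δx) δx p.1 hδx
      have : |hatFn (-L/2 + ((i:ℕ)+1)*δx) δx p.1| ≤ 1 := by
        rw [_root_.abs_of_nonneg] <;> assumption
      nlinarith [abs_nonneg (α i)]
    have h2 : |hatFn (T - δz) δz p.2| ≤ 1 := by
      rw [_root_.abs_of_nonneg (hatFn_nonneg _ _ _)]
      exact hatFn_le_one _ _ _ hδz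
    have h0 : (0:ℝ) ≤ |∑ i : Fin (Nx-1), α i * hatFn (-L/2 + ((i:ℕ)+1)*δx) δx p.1| :=
      abs_nonneg _
    nlinarith
  have hB0 : 0 ≤ B := le_trans (abs_nonneg _) (hf₀bdd (0,0))
  set S : Set (ℝ × ℝ) := (Ioo (-L/2) (L/2)) ×ˢ (Ioo (0:ℝ) T) with hSdef
  have hmeasS : MeasurableSet S := measurableSet_Ioo.prod measurableSet_Ioo
  have hSfin : volume S < ⊤ := by
    rw [hSdef, Measure.volume_eq_prod, Measure.prod_prod, Real.volume_Ioo, Real.volume_Ioo]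
    exact ENNReal.mul_lt_top ENNReal.ofReal_lt_top ENNReal.ofReal_lt_top
  have hnorm_exp : ∀ z : ℂ, ‖Complex.exp z‖ = Real.exp z.re := fun z => by
    rw [Complex.norm_exp]
  have hnorm_bound : ∀ lam : ℝ, ∀ p : ℝ × ℝ, p ∈ S →
      ‖(f₀ p : ℂ) * Complex.exp (-(lam^2*v*p.2 : ℝ)) *
        Complex.exp (-(Complex.I*lam*v*p.1))‖ ≤ B := by
    intro lam p hp
    rw [norm_mul, norm_mul, hnorm_exp, hnorm_exp]
    have hz : 0 < p.2 := hp.2.1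
    have e1 : (-(((lam^2*v*p.2):ℝ) : ℂ)).re = -(lam^2*v*p.2) := by
      rw [Complex.neg_re, Complex.ofReal_re]
    have e2 : ((-(Complex.I*lam*v*p.1))).re = 0 := by simp
    rw [e1, e2, Real.exp_zero]
    have hexp1 : Real.exp (-(lam^2*v*p.2)) ≤ 1 := by
      rw [Real.exp_le_one_iff]
      have : 0 ≤ lam^2*v*p.2 := by positivity
      linarith
    have hnf : ‖((f₀ p : ℝ) : ℂ)‖ = |f₀ p| := by
      rw [Complex.norm_real, Real.norm_eq_abs]
    rw [hnf]
    have h1 := hf₀bdd p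
    have h2 := abs_nonneg (f₀ p)
    have h3 := Real.exp_nonneg (-(lam^2*v*p.2))
    nlinarith
  have hMcont : Continuous (fun lam : ℝ => michellTransform L T v lam f₀) := by
    unfold michellTransform
    apply continuous_of_dominated (bound := fun _ => B)
    · intro lam
      apply Continuous.aestronglyMeasurable
      have := hf₀cont
      fun_prop
    · intro lam
      filter_upwards [ae_restrict_mem hmeasS] with p hp
      exact hnorm_bound lam p hp
    · exact integrableOn_const hSfin.ne
    · filter_upwards with p
      fun_prop
  -- the z-factor
  set Zr : ℝ → ℝ := fun lam =>
    ∫ z in Ioo (0:ℝ) T, hatFn (T - δz) δz z * Real.exp (-(lam^2*v*z)) with hZrdef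
  have hZpos : ∀ lam : ℝ, 0 < Zr lam := fun lam => Z_pos T δz (lam^2*v) hT hδz hδzT
  -- factorization
  have hfact : ∀ lam : ℝ, michellTransform L T v lam f₀ =
      (∫ x in Ioo (-L/2) (L/2),
        ((∑ i : Fin (Nx-1), α i * hatFn (-L/2 + ((i:ℕ)+1)*δx) δx x : ℝ) : ℂ) *
          Complex.exp (-(Complex.I*lam*v*x))) * ((Zr lam : ℝ) : ℂ) := by
    intro lam
    unfold michellTransform
    rw [Measure.volume_eq_prod]
    have hre : (fun p : ℝ×ℝ => (f₀ p : ℂ) * Complex.exp (-(lam^2*v*p.2 : ℝ)) *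
        Complex.exp (-(Complex.I*lam*v*p.1))) =
        fun p : ℝ×ℝ => ((fun x : ℝ =>
            ((∑ i : Fin (Nx-1), α i * hatFn (-L/2+((i:ℕ)+1)*δx) δx x : ℝ) : ℂ) *
            Complex.exp (-(Complex.I*lam*v*x))) p.1) *
          ((fun z : ℝ => ((hatFn (T - δz) δz z : ℝ) : ℂ) *
            Complex.exp (-((lam^2*v*z : ℝ) : ℂ))) p.2) := by
      funext p
      rw [hf₀def]
      push_cast
      ring
    rw [hre, MeasureTheory.setIntegral_prod_mul
      (fun x : ℝ => ((∑ i : Fin (Nx-1), α i * hatFn (-L/2+((i:ℕ)+1)*δx) δx x : ℝ) : ℂ) *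
        Complex.exp (-(Complex.I*lam*v*x)))
      (fun z : ℝ => ((hatFn (T - δz) δz z : ℝ) : ℂ) * Complex.exp (-((lam^2*v*z : ℝ) : ℂ)))
      (Ioo (-L/2) (L/2)) (Ioo (0:ℝ) T)]
    congr 1
    rw [hZrdef]
    have hzz : ∀ z : ℝ, ((hatFn (T-δz) δz z : ℝ):ℂ) * Complex.exp (-((lam^2*v*z : ℝ):ℂ)) =
        ((hatFn (T-δz) δz z * Real.exp (-(lam^2*v*z)) : ℝ) : ℂ) :=
      fun z => by push_cast [Complex.ofReal_exp]; ring
    simp only [hzz]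
    exact integral_ofReal
  -- nonvanishing off a countable set
  obtain ⟨i₀, hi₀⟩ := Function.ne_iff.mp hα
  have hi₀' : α i₀ ≠ 0 := by simpa using hi₀
  set q : Polynomial ℂ :=
    ∑ i : Fin (Nx-1), Polynomial.C ((α i : ℝ) : ℂ) * Polynomial.X^((i:ℕ)+1) with hqdef
  have hq0 : q ≠ 0 := poly_ne_zero α i₀ hi₀'
  have hvδx : v * δx ≠ 0 := ne_of_gt (mul_pos hv hδx)
  set N : Set ℝ := {lam : ℝ | Real.cos (lam*v*δx) = 1} ∪
      {lam : ℝ | q.eval (Complex.exp (-(Complex.I * ((v*δx : ℝ):ℂ) * (lam:ℂ)))) = 0} with hNdef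
  have hNcount : N.Countable := by
    apply Set.Countable.union
    · refine (cos_countable (v*δx) hvδx).mono ?_
      intro lam hlam
      simp only [mem_setOf_eq] at *
      rw [show v*δx*lam = lam*v*δx by ring]
      exact hlam
    · exact poly_fiber_countable q hq0 (v*δx) hvδx
  have hNnull : volume N = 0 := hNcount.measure_zero _
  have hMne : ∀ lam, lam ∈ Ioo (1:ℝ) Λ \ N → michellTransform L T v lam f₀ ≠ 0 := by
    rintro lam ⟨hmem, hN⟩
    have hlam1 : 1 < lam := hmem.1
    have hξ : lam * v ≠ 0 := ne_of_gt (mul_pos (by linarith) hv)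
    rw [hfact lam]
    apply mul_ne_zero
    · rw [X_eq L v δx hδx α (fun i => -L/2 + ((i:ℕ)+1)*δx) (fun i => rfl) hsupp lam hξ]
      apply mul_ne_zero
      · apply mul_ne_zero
        · apply div_ne_zero
          · rw [show Complex.I * ((lam*v : ℝ):ℂ) * (δx:ℂ) =
                Complex.I * ((lam*v*δx : ℝ):ℂ) by push_cast; ring]
            apply two_sub_exp_ne
            intro hcos
            exact hN (Or.inl hcos)
          · exact mul_ne_zero (Complex.ofReal_ne_zero.mpr (ne_of_gt hδx))
              (pow_ne_zero 2 (Complex.ofReal_ne_zero.mpr hξ))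
        · exact Complex.exp_ne_zero _
      · rw [← poly_eval α (Complex.exp (-(Complex.I * ((v*δx : ℝ):ℂ) * (lam:ℂ))))]
        intro h0
        exact hN (Or.inr h0)
    · exact Complex.ofReal_ne_zero.mpr (ne_of_gt (hZpos lam))
  -- uniform bound on the transform
  have habsM : ∀ lam : ℝ,
      ‖michellTransform L T v lam f₀‖ ≤ (volume S).toReal * B := by
    intro lam
    have h2 : ‖michellTransform L T v lam f₀‖ ≤
        ∫ p in S, ‖(f₀ p : ℂ) * Complex.exp (-(lam^2*v*p.2 : ℝ)) *
          Complex.exp (-(Complex.I*lam*v*p.1))‖ := by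
      unfold michellTransform
      exact norm_integral_le_integral_norm _
    have h3 : (∫ p in S, ‖(f₀ p : ℂ) * Complex.exp (-(lam^2*v*p.2 : ℝ)) *
          Complex.exp (-(Complex.I*lam*v*p.1))‖) ≤ ∫ _p in S, B := by
      apply integral_mono_of_nonneg
      · exact Filter.Eventually.of_forall fun p => norm_nonneg _
      · exact integrableOn_const hSfin.ne
      · filter_upwards [ae_restrict_mem hmeasS] with p hp
        exact hnorm_bound lam p hp
    have h4 : (∫ _p in S, B) = (volume S).toReal * B := by
      rw [setIntegral_const, smul_eq_mul, Measure.real]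
    rw [← h4]
    exact le_trans h2 h3
  set C : ℝ := (volume S).toReal * B with hCdef
  have hC0 : 0 ≤ C := mul_nonneg ENNReal.toReal_nonneg hB0
  -- measurability of the integrand
  have hFmeas : AEStronglyMeasurable (fun lam : ℝ =>
      ‖michellTransform L T v lam f₀‖^2 * lam^4 / Real.sqrt (lam^2 - 1))
      (volume.restrict (Ioo (1:ℝ) Λ)) := by
    have m1 : Measurable fun lam : ℝ =>
        ‖michellTransform L T v lam f₀‖^2 * lam^4 :=
      (((continuous_norm.comp hMcont).pow 2).mul (continuous_pow 4)).measurable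
    have m2 : Measurable fun lam : ℝ => Real.sqrt (lam^2 - 1) :=
      (Real.continuous_sqrt.comp ((continuous_pow 2).sub continuous_const)).measurable
    exact (m1.div m2).aestronglyMeasurable
  -- integrable bound
  have hbound_int : IntegrableOn
      (fun lam : ℝ => (C^2*Λ^4) * (lam-1)^(-(1/2) : ℝ)) (Ioo (1:ℝ) Λ) := by
    have h1 : IntervalIntegrable (fun x : ℝ => x ^ (-(1/2) : ℝ)) volume 0 (Λ-1) :=
      intervalIntegral.intervalIntegrable_rpow' (by norm_num)
    have h2 := h1.comp_sub_right 1
    have h2' : IntervalIntegrable (fun x : ℝ => (x-1) ^ (-(1/2):ℝ)) volume 1 Λ := by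
      simpa using h2
    rw [intervalIntegrable_iff] at h2'
    have h3 : IntegrableOn (fun x : ℝ => (x-1)^(-(1/2):ℝ)) (Ioo (1:ℝ) Λ) := by
      apply h2'.mono_set
      rw [uIoc_of_le (by linarith : (1:ℝ) ≤ Λ)]
      exact Ioo_subset_Ioc_self
    exact h3.const_mul _
  -- integrability of the integrand
  have hFint : IntegrableOn (fun lam : ℝ =>
      ‖michellTransform L T v lam f₀‖^2 * lam^4 / Real.sqrt (lam^2-1))
      (Ioo (1:ℝ) Λ) := by
    apply Integrable.mono' hbound_int hFmeas
    filter_upwards [ae_restrict_mem measurableSet_Ioo] with lam hlam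
    have h1 : 0 < lam - 1 := by have := hlam.1; linarith
    have habs := habsM lam
    have habs0 : 0 ≤ ‖michellTransform L T v lam f₀‖ :=
      norm_nonneg _
    have hsq1 : Real.sqrt (lam-1) ≤ Real.sqrt (lam^2-1) :=
      Real.sqrt_le_sqrt (by nlinarith)
    have hsq0 : 0 < Real.sqrt (lam-1) := Real.sqrt_pos.mpr h1
    have hl0 : (0:ℝ) ≤ lam := by linarith
    have hnum : ‖michellTransform L T v lam f₀‖^2 * lam^4 ≤ C^2*Λ^4 := by
      have h4 : lam^4 ≤ Λ^4 := pow_le_pow_left₀ hl0 (le_of_lt hlam.2) 4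
      have h5 : ‖michellTransform L T v lam f₀‖^2 ≤ C^2 :=
        pow_le_pow_left₀ habs0 habs 2
      nlinarith [pow_nonneg habs0 2, pow_nonneg hl0 4]
    rw [Real.norm_eq_abs, _root_.abs_of_nonneg (by positivity)]
    calc ‖michellTransform L T v lam f₀‖^2 * lam^4 / Real.sqrt (lam^2-1)
        ≤ (C^2*Λ^4) / Real.sqrt (lam-1) := div_le_div₀ (by positivity) hnum hsq0 hsq1
      _ = (C^2*Λ^4) * (lam-1)^(-(1/2):ℝ) := by
          rw [Real.rpow_neg h1.le, ← Real.sqrt_eq_rpow, div_eq_mul_inv]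
  -- conclusion
  rw [setIntegral_pos_iff_support_of_nonneg_ae ?_ hFint]
  · have hsub : Ioo (1:ℝ) Λ \ N ⊆ Function.support (fun lam : ℝ =>
        ‖michellTransform L T v lam f₀‖^2 * lam^4 / Real.sqrt (lam^2-1)) ∩
        Ioo (1:ℝ) Λ := by
      rintro lam ⟨hmem, hN⟩
      refine ⟨?_, hmem⟩
      have hMne' := hMne lam ⟨hmem, hN⟩
      have h1 : 0 < ‖michellTransform L T v lam f₀‖ :=
        norm_pos_iff.mpr hMne'
      have h2 : 0 < lam := lt_trans one_pos hmem.1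
      have h3 : 0 < Real.sqrt (lam^2-1) := Real.sqrt_pos.mpr (by nlinarith [hmem.1])
      simp only [Function.mem_support]
      exact ne_of_gt (div_pos (by positivity) h3)
    calc (0:ENNReal) < volume (Ioo (1:ℝ) Λ \ N) := by
          rw [measure_diff_null hNnull, Real.volume_Ioo]
          simp only [ENNReal.ofReal_pos]
          linarith
      _ ≤ _ := measure_mono hsub
  · filter_upwards with lam
    positivity
end
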